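/- Let k be an algebraically closed field of characteristic p > 0 and let n = p. The tensor product (in the category of affine abelian group schemes over k) of the group scheme μ_p of p-th roots of unity with itself is the trivial group scheme: μ_p ⊗ μ_p = 0. -/

import Mathlib

/-- An affine abelian group scheme over `k`, presented via its functor of points: a
commutative `k`-algebra `C` (the coordinate ring) together with a natural abelian group
structure on the representable functor `R ↦ Hom_{k-alg}(C, R)`. -/
structure AffAbGrp (k : Type) [CommRing k] : Type 1 where
  C : Type
  [commRing : CommRing C]
  [algebra : Algebra k C]
  add : ∀ (R : Type) [CommRing R] [Algebra k R],
    (C →ₐ[k] R) → (C →ₐ[k] R) → (C →ₐ[k] R)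
  zero : ∀ (R : Type) [CommRing R] [Algebra k R], (C →ₐ[k] R)
  neg : ∀ (R : Type) [CommRing R] [Algebra k R], (C →ₐ[k] R) → (C →ₐ[k] R)
  add_assoc : ∀ (R : Type) [CommRing R] [Algebra k R] (f g h : C →ₐ[k] R),
    add R (add R f g) h = add R f (add R g h)
  add_comm : ∀ (R : Type) [CommRing R] [Algebra k R] (f g : C →ₐ[k] R),
    add R f g = add R g f
  zero_add : ∀ (R : Type) [CommRing R] [Algebra k R] (f : C →ₐ[k] R),
    add R (zero R) f = f
  neg_add : ∀ (R : Type) [CommRing R] [Algebra k R] (f : C →ₐ[k] R),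
    add R (neg R f) f = zero R
  map_add : ∀ (R S : Type) [CommRing R] [Algebra k R] [CommRing S] [Algebra k S]
    (ψ : R →ₐ[k] S) (f g : C →ₐ[k] R),
    ψ.comp (add R f g) = add S (ψ.comp f) (ψ.comp g)
  map_zero : ∀ (R S : Type) [CommRing R] [Algebra k R] [CommRing S] [Algebra k S]
    (ψ : R →ₐ[k] S), ψ.comp (zero R) = zero S

attribute [instance] AffAbGrp.commRing AffAbGrp.algebra

/-- The group functor `μ_p` of `p`-th roots of unity: over `R` it is the subgroup
`{x ∈ Rˣ : x^p = 1}`. -/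
def mu (p : ℕ) (R : Type) [CommRing R] : Subgroup Rˣ :=
  MonoidHom.ker (powMonoidHom p : Rˣ →* Rˣ)

/-- Functoriality of `μ_p` in `R`. -/
def muMap (p : ℕ) {R S : Type} [CommRing R] [CommRing S] (ψ : R →+* S) (x : mu p R) :
    mu p S :=
  ⟨Units.map ψ.toMonoidHom (x : Rˣ), by
    have hx : (x : Rˣ) ^ p = 1 := x.2
    simp only [mu, MonoidHom.mem_ker, powMonoidHom_apply, ← map_pow, hx, map_one]⟩

namespace AffAbGrp

variable {k : Type} [CommRing k] (H : AffAbGrp k)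

lemma zero_apply (T : Type) [CommRing T] [Algebra k T] (c : H.C) :
    H.zero T c = algebraMap k T (H.zero k c) := by
  rw [← H.map_zero k T (Algebra.ofId k T)]; rfl

lemma add_zero' (T : Type) [CommRing T] [Algebra k T] (f : H.C →ₐ[k] T) :
    H.add T f (H.zero T) = f := by
  rw [H.add_comm, H.zero_add]

lemma eq_zero_of_add_self (T : Type) [CommRing T] [Algebra k T]
    (f : H.C →ₐ[k] T) (hf : H.add T f f = f) : f = H.zero T := by
  have h1 : H.add T (H.neg T f) (H.add T f f) = H.add T (H.neg T f) f := by rw [hf]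
  rw [← H.add_assoc, H.neg_add, H.zero_add] at h1
  exact h1

lemma add_apply_of_sq_zero (T : Type) [CommRing T] [Algebra k T]
    (I : Submodule k T) (hI : ∀ a ∈ I, ∀ b ∈ I, a * b = 0)
    (f g : H.C →ₐ[k] T) (hf : ∀ c, f c - H.zero T c ∈ I)
    (hg : ∀ c, g c - H.zero T c ∈ I) (c : H.C) :
    H.add T f g c = f c + g c - H.zero T c := by
  set z := H.zero T with hzdef
  let W : Subalgebra k (T × T × T) :=
    { carrier := {w | (∃ a : k, w.2.2 = algebraMap k T a) ∧ w.1 - w.2.2 ∈ I ∧ w.2.1 - w.2.2 ∈ I}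
      mul_mem' := by
        rintro w w' ⟨⟨a, ha⟩, h1, h2⟩ ⟨⟨a', ha'⟩, h1', h2'⟩
        refine ⟨⟨a * a', by simp [ha, ha', Prod.snd_mul, map_mul]⟩, ?_, ?_⟩
        · have e : (w * w').1 - (w * w').2.2
              = a • (w'.1 - w'.2.2) + (w.1 - w.2.2) * (w'.1 - w'.2.2)
                + a' • (w.1 - w.2.2) := by
            simp only [Prod.fst_mul, Prod.snd_mul, Algebra.smul_def]
            rw [← ha, ← ha']; ring
          rw [e, hI _ h1 _ h1', add_zero]
          exact I.add_mem (I.smul_mem a h1') (I.smul_mem a' h1)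
        · have e : (w * w').2.1 - (w * w').2.2
              = a • (w'.2.1 - w'.2.2) + (w.2.1 - w.2.2) * (w'.2.1 - w'.2.2)
                + a' • (w.2.1 - w.2.2) := by
            simp only [Prod.fst_mul, Prod.snd_mul, Algebra.smul_def]
            rw [← ha, ← ha']; ring
          rw [e, hI _ h2 _ h2', add_zero]
          exact I.add_mem (I.smul_mem a h2') (I.smul_mem a' h2)
      one_mem' := ⟨⟨1, by simp⟩, by simp, by simp⟩
      add_mem' := by
        rintro w w' ⟨⟨a, ha⟩, h1, h2⟩ ⟨⟨a', ha'⟩, h1', h2'⟩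
        refine ⟨⟨a + a', by simp [ha, ha', Prod.snd_add, map_add]⟩, ?_, ?_⟩
        · have e : (w + w').1 - (w + w').2.2 = (w.1 - w.2.2) + (w'.1 - w'.2.2) := by
            simp only [Prod.fst_add, Prod.snd_add]; ring
          rw [e]; exact I.add_mem h1 h1'
        · have e : (w + w').2.1 - (w + w').2.2 = (w.2.1 - w.2.2) + (w'.2.1 - w'.2.2) := by
            simp only [Prod.fst_add, Prod.snd_add]; ring
          rw [e]; exact I.add_mem h2 h2'
      algebraMap_mem' := fun a => ⟨⟨a, rfl⟩, by simp, by simp⟩ }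
  let P1 : ↥W →ₐ[k] T := (AlgHom.fst k T (T × T)).comp W.val
  let P2 : ↥W →ₐ[k] T := (AlgHom.fst k T T).comp ((AlgHom.snd k T (T × T)).comp W.val)
  let P3 : ↥W →ₐ[k] T := (AlgHom.snd k T T).comp ((AlgHom.snd k T (T × T)).comp W.val)
  let sg : ↥W →ₐ[k] T :=
    { toFun := fun w => (w : T × T × T).1 + (w : T × T × T).2.1 - (w : T × T × T).2.2
      map_one' := by simp
      map_zero' := by simp
      map_add' := fun w w' => by
        simp only [Subalgebra.coe_add, Prod.fst_add, Prod.snd_add]; ring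
      map_mul' := fun w w' => by
        obtain ⟨⟨a, ha⟩, h1, h2⟩ := w.2
        obtain ⟨⟨a', ha'⟩, h1', h2'⟩ := w'.2
        simp only [Subalgebra.coe_mul, Prod.fst_mul, Prod.snd_mul]
        have e1 : ((w : T × T × T).1 - (w : T × T × T).2.2) * ((w' : T × T × T).2.1 - (w' : T × T × T).2.2) = 0 :=
          hI _ h1 _ h2'
        have e2 : ((w : T × T × T).2.1 - (w : T × T × T).2.2) * ((w' : T × T × T).1 - (w' : T × T × T).2.2) = 0 :=
          hI _ h2 _ h1'
        linear_combination -e1 - e2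
      commutes' := fun a => by
        simp only [Subalgebra.coe_algebraMap, Prod.algebraMap_apply]
        ring }
  have hzalg : ∀ c, z c = algebraMap k T (H.zero k c) := H.zero_apply T
  have memW : ∀ (F G : H.C →ₐ[k] T), (∀ c, F c - z c ∈ I) → (∀ c, G c - z c ∈ I) →
      ∀ c, ((F.prod (G.prod z)) c) ∈ W := by
    intro F G hF hG c
    exact ⟨⟨H.zero k c, hzalg c⟩, hF c, hG c⟩
  have memz : ∀ c, z c - z c ∈ I := fun c => by rw [sub_self]; exact I.zero_mem
  let h1 : H.C →ₐ[k] ↥W := (f.prod (z.prod z)).codRestrict W (memW f z hf memz)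
  let h2 : H.C →ₐ[k] ↥W := (z.prod (g.prod z)).codRestrict W (memW z g memz hg)
  let hh : H.C →ₐ[k] ↥W := (f.prod (g.prod z)).codRestrict W (memW f g hf hg)
  have hdet : H.add ↥W h1 h2 = hh := by
    have hP1 : P1.comp (H.add ↥W h1 h2) = f := by
      rw [H.map_add]
      have e1 : P1.comp h1 = f := rfl
      have e2 : P1.comp h2 = z := rfl
      rw [e1, e2, hzdef, H.add_zero']
    have hP2 : P2.comp (H.add ↥W h1 h2) = g := by
      rw [H.map_add]
      have e1 : P2.comp h1 = z := rfl
      have e2 : P2.comp h2 = g := rfl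
      rw [e1, e2, hzdef, H.zero_add]
    have hP3 : P3.comp (H.add ↥W h1 h2) = z := by
      rw [H.map_add]
      have e1 : P3.comp h1 = z := rfl
      have e2 : P3.comp h2 = z := rfl
      rw [e1, e2, hzdef, H.zero_add]
    apply AlgHom.ext; intro c
    have a1 := congrArg (fun F : H.C →ₐ[k] T => F c) hP1
    have a2 := congrArg (fun F : H.C →ₐ[k] T => F c) hP2
    have a3 := congrArg (fun F : H.C →ₐ[k] T => F c) hP3
    exact Subtype.ext (Prod.ext a1 (Prod.ext a2 a3))
  have hs1 : sg.comp h1 = f := by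
    apply AlgHom.ext; intro c
    show f c + z c - z c = f c
    ring
  have hs2 : sg.comp h2 = g := by
    apply AlgHom.ext; intro c
    show z c + g c - z c = g c
    ring
  have final : H.add T f g = sg.comp hh := by
    rw [← hs1, ← hs2, ← H.map_add, hdet]
  have := congrArg (fun F : H.C →ₐ[k] T => F c) final
  exact this

lemma add_apply_mod (T : Type) [CommRing T] [Algebra k T] (J : Ideal T) (I : Submodule k T)
    (hIJ : ∀ a ∈ I, ∀ b ∈ I, a * b ∈ J)
    (f g : H.C →ₐ[k] T) (hf : ∀ c, f c - H.zero T c ∈ I)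
    (hg : ∀ c, g c - H.zero T c ∈ I) (c : H.C) :
    H.add T f g c - (f c + g c - H.zero T c) ∈ J := by
  let π : T →ₐ[k] T ⧸ J := Ideal.Quotient.mkₐ k J
  have hπz : H.zero (T ⧸ J) = π.comp (H.zero T) := (H.map_zero T _ π).symm
  have hI' : ∀ a ∈ I.map π.toLinearMap, ∀ b ∈ I.map π.toLinearMap, a * b = 0 := by
    rintro a ha b hb
    obtain ⟨a₀, ha₀, rfl⟩ := Submodule.mem_map.mp ha
    obtain ⟨b₀, hb₀, rfl⟩ := Submodule.mem_map.mp hb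
    show π a₀ * π b₀ = 0
    rw [← map_mul]
    exact Ideal.Quotient.eq_zero_iff_mem.mpr (hIJ _ ha₀ _ hb₀)
  have hf' : ∀ c, (π.comp f) c - H.zero (T ⧸ J) c ∈ I.map π.toLinearMap := by
    intro c
    rw [hπz]
    show π (f c) - π (H.zero T c) ∈ _
    rw [← map_sub]
    exact Submodule.mem_map_of_mem (hf c)
  have hg' : ∀ c, (π.comp g) c - H.zero (T ⧸ J) c ∈ I.map π.toLinearMap := by
    intro c
    rw [hπz]
    show π (g c) - π (H.zero T c) ∈ _
    rw [← map_sub]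
    exact Submodule.mem_map_of_mem (hg c)
  have key := H.add_apply_of_sq_zero (T ⧸ J) (I.map π.toLinearMap) hI' (π.comp f) (π.comp g) hf' hg' c
  have hcomp := congrArg (fun F : H.C →ₐ[k] T ⧸ J => F c) (H.map_add T (T ⧸ J) π f g)
  rw [← Ideal.Quotient.eq_zero_iff_mem]
  have : π (H.add T f g c - (f c + g c - H.zero T c)) = 0 := by
    rw [map_sub]
    have e1 : π (H.add T f g c) = H.add (T ⧸ J) (π.comp f) (π.comp g) c := hcomp
    have e2 : π (f c + g c - H.zero T c) = (π.comp f) c + (π.comp g) c - H.zero (T ⧸ J) c := by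
      rw [hπz]
      show π _ = π (f c) + π (g c) - π (H.zero T c)
      rw [_root_.map_sub, _root_.map_add]
    rw [e1, e2, key, sub_self]
  exact this

end AffAbGrp


section Helpers

open AddMonoidAlgebra

lemma muMap_eq_of_val {p : ℕ} {R S : Type} [CommRing R] [CommRing S] (ψ : R →+* S)
    (x : mu p R) (w : mu p S) (h : ψ ((x : Rˣ) : R) = ((w : Sˣ) : S)) :
    muMap p ψ x = w :=
  Subtype.ext (Units.ext h)

lemma coeff_mul_dvd {R : Type} [CommRing R] {G : Type} [AddMonoid G] (d e : R)
    (a v : AddMonoidAlgebra R G) (ha : ∀ g, d ∣ a.coeff g) (hv : ∀ g, e ∣ v.coeff g) (g : G) :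
    d * e ∣ (a * v).coeff g := by
  classical
  rw [AddMonoidAlgebra.coeff_mul]
  rw [Finsupp.sum]
  apply Finset.dvd_sum
  intro g₁ _
  rw [Finsupp.sum]
  apply Finset.dvd_sum
  intro g₂ _
  split
  · exact mul_dvd_mul (ha g₁) (hv g₂)
  · exact dvd_zero _

lemma dvd_mapDomain_coeff {R : Type} [CommRing R] {G G₂ : Type} (f : G → G₂) (d : R)
    (v : G →₀ R) (hv : ∀ g, d ∣ v g) (g₂ : G₂) : d ∣ Finsupp.mapDomain f v g₂ := by
  classical
  rw [Finsupp.mapDomain, Finsupp.sum_apply, Finsupp.sum]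
  apply Finset.dvd_sum
  intro a _
  rw [Finsupp.single_apply]
  split
  · exact hv a
  · exact dvd_zero _

def coeffDvd (k : Type) [CommRing k] {R : Type} [CommRing R] [Algebra k R] {G : Type}
    [AddMonoid G] (d : R) : Submodule k (AddMonoidAlgebra R G) where
  carrier := {v | ∀ g, d ∣ v.coeff g}
  add_mem' := fun hv hw g => by
    rw [AddMonoidAlgebra.coeff_add, Finsupp.add_apply]; exact dvd_add (hv g) (hw g)
  zero_mem' := fun g => by rw [AddMonoidAlgebra.coeff_zero, Finsupp.zero_apply]; exact dvd_zero _
  smul_mem' := fun c v hv g => by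
    rw [Algebra.smul_def]
    have h := coeff_mul_dvd 1 d (algebraMap k (AddMonoidAlgebra R G) c) v
      (fun g' => one_dvd _) hv g
    rwa [one_mul] at h

def coeffDvdIdeal {R : Type} [CommRing R] {G : Type} [AddMonoid G] (d : R) :
    Ideal (AddMonoidAlgebra R G) where
  carrier := {v | ∀ g, d ∣ v.coeff g}
  add_mem' := fun hv hw g => by
    rw [AddMonoidAlgebra.coeff_add, Finsupp.add_apply]; exact dvd_add (hv g) (hw g)
  zero_mem' := fun g => by rw [AddMonoidAlgebra.coeff_zero, Finsupp.zero_apply]; exact dvd_zero _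
  smul_mem' := fun c v hv g => by
    rw [smul_eq_mul]
    have h := coeff_mul_dvd 1 d c v (fun g' => one_dvd _) hv g
    rwa [one_mul] at h

noncomputable def singleOneHom {R : Type} [CommRing R] {G : Type} [AddMonoid G] :
    Multiplicative G →* AddMonoidAlgebra R G where
  toFun := fun g => AddMonoidAlgebra.single g.toAdd 1
  map_one' := AddMonoidAlgebra.one_def.symm
  map_mul' := fun a b => by
    show AddMonoidAlgebra.single (a.toAdd + b.toAdd) 1 = _
    rw [AddMonoidAlgebra.single_mul_single, one_mul]

lemma lift_singleOneHom_coeff {R S : Type} [CommRing R] [CommRing S] [Algebra R S]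
    {G : Type} [AddCommMonoid G] (v : AddMonoidAlgebra R G) (g : G) :
    ((AddMonoidAlgebra.lift R (AddMonoidAlgebra S G) G singleOneHom) v).coeff g
      = algebraMap R S (v.coeff g) := by
  classical
  induction v using AddMonoidAlgebra.induction_linear with
  | zero => simp
  | add f h hf hh =>
    rw [map_add, AddMonoidAlgebra.coeff_add, AddMonoidAlgebra.coeff_add, Finsupp.add_apply,
      Finsupp.add_apply, map_add, hf, hh]
  | single a r =>
    rw [AddMonoidAlgebra.lift_single]
    show (r • AddMonoidAlgebra.single a (1 : S)).coeff g = _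
    rw [AddMonoidAlgebra.coeff_smul, AddMonoidAlgebra.coeff_single, AddMonoidAlgebra.coeff_single,
      Finsupp.smul_apply, Finsupp.single_apply, Finsupp.single_apply]
    split
    · rw [Algebra.smul_def, mul_one]
    · rw [smul_zero, map_zero]

noncomputable def uMu (R : Type) [CommRing R] (p : ℕ) : mu p (AddMonoidAlgebra R (ZMod p)) := by
  refine ⟨⟨AddMonoidAlgebra.single 1 1, AddMonoidAlgebra.single (-1) 1, ?_, ?_⟩, ?_⟩
  · rw [AddMonoidAlgebra.single_mul_single, one_mul, add_neg_cancel, ← AddMonoidAlgebra.one_def]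
  · rw [AddMonoidAlgebra.single_mul_single, one_mul, neg_add_cancel, ← AddMonoidAlgebra.one_def]
  · show _ ∈ MonoidHom.ker _
    rw [MonoidHom.mem_ker, powMonoidHom_apply]
    apply Units.ext
    show (AddMonoidAlgebra.single (1 : ZMod p) (1 : R)) ^ p = 1
    rw [AddMonoidAlgebra.single_pow, one_pow, nsmul_eq_mul, mul_one, ZMod.natCast_self,
      ← AddMonoidAlgebra.one_def]

end Helpers

/-- Over an algebraically closed field `k` of characteristic `p`, the
tensor product `μ_p ⊗ μ_p` of affine abelian group schemes is trivial: every bilinear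
natural transformation `μ_p × μ_p → H` into an affine abelian group scheme `H` is
trivial, so `0` corepresents bilinear maps out of `μ_p × μ_p`. -/
theorem mup_tensor_mup_eq_zero (p : ℕ) [Fact p.Prime] (k : Type) [Field k] [IsAlgClosed k]
    [CharP k p] (H : AffAbGrp k)
    (b : ∀ (R : Type) [CommRing R] [Algebra k R], mu p R → mu p R → (H.C →ₐ[k] R))
    (hbl : ∀ (R : Type) [CommRing R] [Algebra k R] (x y : mu p R) (z : mu p R),
      b R (x * y) z = H.add R (b R x z) (b R y z))
    (hbr : ∀ (R : Type) [CommRing R] [Algebra k R] (x : mu p R) (y z : mu p R),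
      b R x (y * z) = H.add R (b R x y) (b R x z))
    (hnat : ∀ (R S : Type) [CommRing R] [Algebra k R] [CommRing S] [Algebra k S]
      (ψ : R →ₐ[k] S) (x y : mu p R),
      ψ.comp (b R x y) = b S (muMap p ψ.toRingHom x) (muMap p ψ.toRingHom y)) :
    ∀ (R : Type) [CommRing R] [Algebra k R] (x y : mu p R), b R x y = H.zero R := by
  classical
  have hone : ∀ (T : Type) [CommRing T] [Algebra k T] (w : mu p T), b T 1 w = H.zero T := by
    intro T _ _ w
    apply H.eq_zero_of_add_self
    have h := hbl T 1 1 w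
    rw [one_mul] at h
    exact h.symm
  intro R _ _ x y
  rcases subsingleton_or_nontrivial R with hR | hR
  · exact AlgHom.ext fun c => Subsingleton.elim _ _
  haveI : CharP R p := charP_of_injective_algebraMap (algebraMap k R).injective p
  have hxp : (x : Rˣ) ^ p = 1 := x.2
  have hyp2 : (y : Rˣ) ^ p = 1 := y.2
  set ξ : R := ((x : Rˣ) : R) with hξ
  have hξp : ξ ^ p = 1 := by
    rw [hξ, ← Units.val_pow_eq_pow_val, hxp, Units.val_one]
  set ν : R := ξ - 1 with hν
  have hνp : ν ^ p = 0 := by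
    rw [hν, sub_pow_char, hξp, one_pow, sub_self]
  -- the universal point
  set u : mu p (AddMonoidAlgebra R (ZMod p)) := uMu R p with hu
  set x₁ : mu p (AddMonoidAlgebra R (ZMod p)) :=
    muMap p (algebraMap R (AddMonoidAlgebra R (ZMod p))) x with hx₁
  set γ : H.C →ₐ[k] AddMonoidAlgebra R (ZMod p) := b _ x₁ u with hγdef
  have KEY : ∀ r : ℕ, 1 ≤ r → ∀ (c : H.C) (g : ZMod p),
      ν ^ r ∣ (γ c - H.zero (AddMonoidAlgebra R (ZMod p)) c).coeff g := by
    intro r hr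
    induction r, hr using Nat.le_induction with
    | base =>
      intro c g
      let Rq := R ⧸ Ideal.span {ν}
      let ψq : AddMonoidAlgebra R (ZMod p) →ₐ[k] AddMonoidAlgebra Rq (ZMod p) :=
        (AddMonoidAlgebra.lift R (AddMonoidAlgebra Rq (ZMod p)) (ZMod p)
          singleOneHom).restrictScalars k
      have hco : ∀ (v : AddMonoidAlgebra R (ZMod p)) (g' : ZMod p),
          (ψq v).coeff g' = algebraMap R Rq (v.coeff g') := fun v g' => lift_singleOneHom_coeff v g'
      have hx1 : muMap p ψq.toRingHom x₁ = 1 := by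
        apply muMap_eq_of_val
        show ψq (algebraMap R (AddMonoidAlgebra R (ZMod p)) ξ) = 1
        have h1 : ψq (algebraMap R (AddMonoidAlgebra R (ZMod p)) ξ)
            = algebraMap R (AddMonoidAlgebra Rq (ZMod p)) ξ :=
          (AddMonoidAlgebra.lift R _ (ZMod p) singleOneHom).commutes ξ
        have h2 : algebraMap R Rq ξ = 1 := by
          have h3 : algebraMap R Rq ν = 0 := by
            rw [Ideal.Quotient.algebraMap_eq, Ideal.Quotient.eq_zero_iff_mem]
            exact Ideal.subset_span rfl
          have h4 : algebraMap R Rq ν = algebraMap R Rq ξ - 1 := by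
            show algebraMap R Rq (ξ - 1) = _
            rw [map_sub, map_one]
          rw [h4] at h3
          exact sub_eq_zero.mp h3
        have h5 : algebraMap R (AddMonoidAlgebra Rq (ZMod p)) ξ
            = AddMonoidAlgebra.single 0 (algebraMap R Rq ξ) :=
          congrFun AddMonoidAlgebra.coe_algebraMap ξ
        rw [h1, h5, h2, ← AddMonoidAlgebra.one_def]
      have hb1 := hnat _ _ ψq x₁ u
      rw [hx1, hone] at hb1
      have hzc : ψq (γ c - H.zero (AddMonoidAlgebra R (ZMod p)) c) = 0 := by
        rw [map_sub]
        have e1 : ψq (γ c) = H.zero (AddMonoidAlgebra Rq (ZMod p)) c :=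
          congrArg (fun F : H.C →ₐ[k] AddMonoidAlgebra Rq (ZMod p) => F c) hb1
        have e2 : ψq (H.zero (AddMonoidAlgebra R (ZMod p)) c)
            = H.zero (AddMonoidAlgebra Rq (ZMod p)) c :=
          congrArg (fun F : H.C →ₐ[k] AddMonoidAlgebra Rq (ZMod p) => F c)
            (H.map_zero _ _ ψq)
        rw [e1, e2, sub_self]
      have hcoef := congrArg (fun w : AddMonoidAlgebra Rq (ZMod p) => w.coeff g) hzc
      simp only [AddMonoidAlgebra.coeff_zero, Finsupp.zero_apply] at hcoef
      rw [hco] at hcoef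
      rw [pow_one, ← Ideal.mem_span_singleton (α := R)]
      rw [Ideal.Quotient.algebraMap_eq] at hcoef
      exact Ideal.Quotient.eq_zero_iff_mem.mp hcoef
    | succ r hr IH =>
      intro c i
      let dgm : AddMonoidAlgebra R (ZMod p) →ₐ[k] AddMonoidAlgebra R (ZMod p × ZMod p) :=
        AddMonoidAlgebra.mapDomainAlgHom k R
          ((AddMonoidHom.id (ZMod p)).prod (AddMonoidHom.id (ZMod p)))
      let i1m : AddMonoidAlgebra R (ZMod p) →ₐ[k] AddMonoidAlgebra R (ZMod p × ZMod p) :=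
        AddMonoidAlgebra.mapDomainAlgHom k R ((AddMonoidHom.id (ZMod p)).prod 0)
      let i2m : AddMonoidAlgebra R (ZMod p) →ₐ[k] AddMonoidAlgebra R (ZMod p × ZMod p) :=
        AddMonoidAlgebra.mapDomainAlgHom k R ((0 : ZMod p →+ ZMod p).prod (AddMonoidHom.id (ZMod p)))
      set x₂ : mu p (AddMonoidAlgebra R (ZMod p × ZMod p)) :=
        muMap p (algebraMap R (AddMonoidAlgebra R (ZMod p × ZMod p))) x with hx₂
      -- values on the base point
      have hvalx : ∀ (F : AddMonoidAlgebra R (ZMod p) →ₐ[k] AddMonoidAlgebra R (ZMod p × ZMod p)),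
          (∀ v, F v = AddMonoidAlgebra.mapDomain (⇑((AddMonoidHom.id (ZMod p)).prod (AddMonoidHom.id (ZMod p)))) v → True) → True := fun _ _ => trivial
      have hmx : ∀ (f0 : ZMod p →+ ZMod p × ZMod p),
          muMap p (AddMonoidAlgebra.mapDomainAlgHom k R f0).toRingHom x₁ = x₂ := by
        intro f0
        apply muMap_eq_of_val
        show AddMonoidAlgebra.mapDomainAlgHom k R f0 (algebraMap R (AddMonoidAlgebra R (ZMod p)) ξ)
          = algebraMap R (AddMonoidAlgebra R (ZMod p × ZMod p)) ξ
        have h5 : algebraMap R (AddMonoidAlgebra R (ZMod p)) ξ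
            = AddMonoidAlgebra.single 0 ξ := by
          have := congrFun (AddMonoidAlgebra.coe_algebraMap (R := R) (A := R) (M := ZMod p)) ξ
          simpa using this
        have h6 : algebraMap R (AddMonoidAlgebra R (ZMod p × ZMod p)) ξ
            = AddMonoidAlgebra.single 0 ξ := by
          have := congrFun (AddMonoidAlgebra.coe_algebraMap (R := R) (A := R) (M := ZMod p × ZMod p)) ξ
          simpa using this
        rw [h5, h6, AddMonoidAlgebra.mapDomainAlgHom_apply, AddMonoidAlgebra.mapDomain_single, map_zero]
      have hdu : muMap p dgm.toRingHom u = muMap p i1m.toRingHom u * muMap p i2m.toRingHom u := by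
        apply Subtype.ext
        apply Units.ext
        show dgm (AddMonoidAlgebra.single (1 : ZMod p) (1 : R))
          = i1m (AddMonoidAlgebra.single 1 1) * i2m (AddMonoidAlgebra.single 1 1)
        rw [AddMonoidAlgebra.mapDomainAlgHom_apply, AddMonoidAlgebra.mapDomainAlgHom_apply,
          AddMonoidAlgebra.mapDomainAlgHom_apply, AddMonoidAlgebra.mapDomain_single,
          AddMonoidAlgebra.mapDomain_single, AddMonoidAlgebra.mapDomain_single,
          AddMonoidAlgebra.single_mul_single, one_mul]
        simp
      have hrel : dgm.comp γ = H.add _ (i1m.comp γ) (i2m.comp γ) := by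
        rw [hγdef, hnat _ _ dgm x₁ u, hnat _ _ i1m x₁ u, hnat _ _ i2m x₁ u,
          hmx _, hmx _, hmx _, hdu, hbr]
      -- divisibility structures
      have hIJ : ∀ a ∈ coeffDvd k (ν ^ r) (G := ZMod p × ZMod p),
          ∀ v ∈ coeffDvd k (ν ^ r) (G := ZMod p × ZMod p),
          a * v ∈ coeffDvdIdeal (ν ^ (r + 1)) (G := ZMod p × ZMod p) := by
        intro a ha v hv g
        have h := coeff_mul_dvd (ν ^ r) (ν ^ r) a v ha hv g
        have h2 : ν ^ (r + 1) ∣ ν ^ r * ν ^ r := by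
          rw [← pow_add]
          exact pow_dvd_pow ν (by omega)
        exact dvd_trans h2 h
      have hmem : ∀ (F : AddMonoidAlgebra R (ZMod p) →ₐ[k] AddMonoidAlgebra R (ZMod p × ZMod p))
          (f0 : ZMod p →+ ZMod p × ZMod p), F = AddMonoidAlgebra.mapDomainAlgHom k R f0 →
          ∀ c', F.comp γ c' - H.zero (AddMonoidAlgebra R (ZMod p × ZMod p)) c'
            ∈ coeffDvd k (ν ^ r) (G := ZMod p × ZMod p) := by
        intro F f0 hF c'
        have e2 : H.zero (AddMonoidAlgebra R (ZMod p × ZMod p)) c'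
            = F (H.zero (AddMonoidAlgebra R (ZMod p)) c') :=
          (congrArg (fun F' : H.C →ₐ[k] AddMonoidAlgebra R (ZMod p × ZMod p) => F' c')
            (H.map_zero _ _ F)).symm
        show ∀ g, ν ^ r ∣ (F (γ c') - H.zero (AddMonoidAlgebra R (ZMod p × ZMod p)) c').coeff g
        intro g
        rw [e2, ← map_sub, hF, AddMonoidAlgebra.mapDomainAlgHom_apply, AddMonoidAlgebra.coeff_mapDomain]
        exact dvd_mapDomain_coeff _ _ _ (IH c') g
      have key := H.add_apply_mod (AddMonoidAlgebra R (ZMod p × ZMod p))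
        (coeffDvdIdeal (ν ^ (r + 1))) (coeffDvd k (ν ^ r)) hIJ
        (i1m.comp γ) (i2m.comp γ) (hmem i1m _ rfl) (hmem i2m _ rfl) c
      rw [← hrel] at key
      -- rewrite as statement about D := γ c - zero c
      have hzd : ∀ (F : AddMonoidAlgebra R (ZMod p) →ₐ[k] AddMonoidAlgebra R (ZMod p × ZMod p)),
          F (γ c) = F (γ c - H.zero (AddMonoidAlgebra R (ZMod p)) c)
            + H.zero (AddMonoidAlgebra R (ZMod p × ZMod p)) c := by
        intro F
        have e2 : H.zero (AddMonoidAlgebra R (ZMod p × ZMod p)) c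
            = F (H.zero (AddMonoidAlgebra R (ZMod p)) c) :=
          (congrArg (fun F' : H.C →ₐ[k] AddMonoidAlgebra R (ZMod p × ZMod p) => F' c)
            (H.map_zero _ _ F)).symm
        rw [e2, ← map_add, sub_add_cancel]
      have key2 : ∀ g, ν ^ (r + 1) ∣
          (dgm (γ c - H.zero (AddMonoidAlgebra R (ZMod p)) c)
            - i1m (γ c - H.zero (AddMonoidAlgebra R (ZMod p)) c)
            - i2m (γ c - H.zero (AddMonoidAlgebra R (ZMod p)) c)).coeff g := by
        intro g
        have e : dgm.comp γ c - (i1m.comp γ c + i2m.comp γ c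
              - H.zero (AddMonoidAlgebra R (ZMod p × ZMod p)) c)
            = dgm (γ c - H.zero (AddMonoidAlgebra R (ZMod p)) c)
              - i1m (γ c - H.zero (AddMonoidAlgebra R (ZMod p)) c)
              - i2m (γ c - H.zero (AddMonoidAlgebra R (ZMod p)) c) := by
          show dgm (γ c) - (i1m (γ c) + i2m (γ c) - _) = _
          rw [hzd dgm, hzd i1m, hzd i2m]
          ring
        rw [← e]
        exact key g
      -- coefficient extraction at (i, 0)
      set D : AddMonoidAlgebra R (ZMod p) := γ c - H.zero (AddMonoidAlgebra R (ZMod p)) c with hD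
      have h1 := key2 (i, 0)
      have hddg : (dgm D).coeff (i, 0) = if i = 0 then D.coeff 0 else 0 := by
        rw [AddMonoidAlgebra.mapDomainAlgHom_apply, AddMonoidAlgebra.coeff_mapDomain]
        by_cases hi : i = 0
        · subst hi
          rw [if_pos rfl]
          have : ((0, 0) : ZMod p × ZMod p)
              = ((AddMonoidHom.id (ZMod p)).prod (AddMonoidHom.id (ZMod p))) 0 := by simp
          rw [this, Finsupp.mapDomain_apply (fun a a' h => (Prod.ext_iff.mp h).1)]
        · rw [if_neg hi]
          apply Finsupp.mapDomain_notin_range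
          rintro ⟨a, ha⟩
          have h1' := (Prod.ext_iff.mp ha).1
          have h2' := (Prod.ext_iff.mp ha).2
          simp only [AddMonoidHom.prod_apply, AddMonoidHom.id_apply] at h1' h2'
          exact hi (h1'.symm.trans h2')
      have hi1 : (i1m D).coeff (i, 0) = D.coeff i := by
        rw [AddMonoidAlgebra.mapDomainAlgHom_apply, AddMonoidAlgebra.coeff_mapDomain]
        have : ((i, 0) : ZMod p × ZMod p) = ((AddMonoidHom.id (ZMod p)).prod 0) i := by simp
        rw [this, Finsupp.mapDomain_apply (fun a a' h => by
          simpa using (Prod.ext_iff.mp h).1)]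
      have hi2 : (i2m D).coeff (i, 0) = if i = 0 then D.coeff 0 else 0 := by
        rw [AddMonoidAlgebra.mapDomainAlgHom_apply, AddMonoidAlgebra.coeff_mapDomain]
        by_cases hi : i = 0
        · subst hi
          rw [if_pos rfl]
          have : ((0, 0) : ZMod p × ZMod p)
              = ((0 : ZMod p →+ ZMod p).prod (AddMonoidHom.id (ZMod p))) 0 := by simp
          rw [this, Finsupp.mapDomain_apply (fun a a' h => by
            simpa using (Prod.ext_iff.mp h).2)]
        · rw [if_neg hi]
          apply Finsupp.mapDomain_notin_range
          rintro ⟨a, ha⟩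
          have h1' := (Prod.ext_iff.mp ha).1
          simp only [AddMonoidHom.prod_apply, AddMonoidHom.zero_apply] at h1'
          exact hi h1'.symm
      by_cases hi : i = 0
      · subst hi
        have e : (dgm D - i1m D - i2m D).coeff ((0 : ZMod p), (0 : ZMod p)) = -(D.coeff 0) := by
          rw [AddMonoidAlgebra.coeff_sub, AddMonoidAlgebra.coeff_sub, Finsupp.sub_apply, Finsupp.sub_apply, hddg, hi1, hi2]
          simp
        rw [e] at h1
        exact (dvd_neg).mp h1
      · have e : (dgm D - i1m D - i2m D).coeff (i, (0 : ZMod p)) = -(D.coeff i) := by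
          rw [AddMonoidAlgebra.coeff_sub, AddMonoidAlgebra.coeff_sub, Finsupp.sub_apply, Finsupp.sub_apply, hddg, hi1, hi2]
          simp [hi]
        rw [e] at h1
        exact (dvd_neg).mp h1
  -- conclude γ = zero
  have hγ : γ = H.zero (AddMonoidAlgebra R (ZMod p)) := by
    apply AlgHom.ext
    intro c
    have hz : γ c - H.zero (AddMonoidAlgebra R (ZMod p)) c = 0 := by
      apply AddMonoidAlgebra.ext
      apply Finsupp.ext
      intro g
      have h := KEY p (Fact.out : p.Prime).one_lt.le c g
      rw [hνp] at h
      rw [AddMonoidAlgebra.coeff_zero, Finsupp.zero_apply]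
      exact zero_dvd_iff.mp h
    have := sub_eq_zero.mp hz
    exact this
  -- evaluate the universal identity at y
  have hyv : ((y : Rˣ) : R) ^ p = 1 := by
    rw [← Units.val_pow_eq_pow_val, hyp2, Units.val_one]
  let fZ : ℤ →+ Additive Rˣ := zmultiplesHom (Additive Rˣ) (Additive.ofMul (y : Rˣ))
  have hfZ : fZ (p : ℤ) = 0 := by
    show (p : ℤ) • Additive.ofMul (y : Rˣ) = 0
    rw [← ofMul_zpow, zpow_natCast, hyp2]
    rfl
  let fq : ZMod p →+ Additive Rˣ := ZMod.lift p ⟨fZ, hfZ⟩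
  let Fy : Multiplicative (ZMod p) →* R :=
    (Units.coeHom R).comp (AddMonoidHom.toMultiplicativeLeft fq)
  let ev : AddMonoidAlgebra R (ZMod p) →ₐ[k] R :=
    (AddMonoidAlgebra.lift R R (ZMod p) Fy).restrictScalars k
  have hevx : muMap p ev.toRingHom x₁ = x := by
    apply muMap_eq_of_val
    show ev (algebraMap R (AddMonoidAlgebra R (ZMod p)) ξ) = ξ
    exact (AddMonoidAlgebra.lift R R (ZMod p) Fy).commutes ξ
  have hevu : muMap p ev.toRingHom u = y := by
    apply muMap_eq_of_val
    show ev (AddMonoidAlgebra.single (1 : ZMod p) (1 : R)) = ((y : Rˣ) : R)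
    have h1 : ev (AddMonoidAlgebra.single (1 : ZMod p) (1 : R))
        = (1 : R) • Fy (Multiplicative.ofAdd (1 : ZMod p)) :=
      AddMonoidAlgebra.lift_single Fy _ _
    rw [h1, one_smul]
    show ((fq (1 : ZMod p)).toMul : Rˣ).val = _
    have h2 : (1 : ZMod p) = ((1 : ℤ) : ZMod p) := by push_cast; ring
    rw [h2]
    have h3 : fq ((1 : ℤ) : ZMod p) = fZ 1 := ZMod.lift_coe p ⟨fZ, hfZ⟩ 1
    rw [h3]
    show (((1 : ℤ) • Additive.ofMul (y : Rˣ)).toMul : Rˣ).val = _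
    rw [one_zsmul]
    rfl
  have hfin := hnat _ _ ev x₁ u
  rw [hevx, hevu] at hfin
  rw [← hγdef, hγ, H.map_zero] at hfin
  exact hfin.symm
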